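/- For the Cucker–Smale system with positive interaction on [t_{2n}, t_{2n+1}], suppose ψ̃(|x_i(t) - x_j(t)|) ≥ ψ̃_t := min{ψ̃(r) : r ∈ [0, max_{s∈[0,t]} d_X(s)]} > 0 for all i,j,t, and let T ≥ t_{2n+1}-t_{2n}, φ(t) := min{e^{-K̃T} ψ̃_t, e^{-K̃T}/T}. Then d_V(t_{2n+1}) ≤ (1 - ∫_{t_{2n}}^{t_{2n+1}} φ(s) ds) · d_V(t_{2n}), and the factor 1 - ∫ φ lies in (0,1). -/

import Mathlib

open Set Filter MeasureTheory intervalIntegral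
open scoped Topology RealInnerProductSpace

lemma cs_inner_bound {N d : ℕ} (hN : 2 ≤ N) (ψ : ℝ → ℝ)
    (X V : Fin N → EuclideanSpace ℝ (Fin d)) (ψ0 D0 : ℝ) (hψ0 : 0 < ψ0)
    (hlow : ∀ i j : Fin N, ψ0 ≤ ψ ‖X i - X j‖)
    (hle : ∀ k l : Fin N, ‖V k - V l‖ ≤ D0) (i j : Fin N) (heq : ‖V i - V j‖ = D0) :
    ⟪(((N : ℝ) - 1)⁻¹ • ∑ k ∈ Finset.univ.erase i, ψ ‖X i - X k‖ • (V k - V i)) -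
      (((N : ℝ) - 1)⁻¹ • ∑ k ∈ Finset.univ.erase j, ψ ‖X j - X k‖ • (V k - V j)),
      V i - V j⟫ ≤ -(ψ0 * (D0 * D0)) := by
  have hN1 : (1 : ℝ) ≤ (N : ℝ) - 1 := by
    have : (2 : ℝ) ≤ (N : ℝ) := by exact_mod_cast hN
    linarith
  have hND : (0:ℝ) < (N : ℝ) - 1 := by linarith
  set W : EuclideanSpace ℝ (Fin d) := V i - V j with hW
  have hD0 : 0 ≤ D0 := heq ▸ norm_nonneg _
  set a : Fin N → ℝ := fun k => ⟪V k - V i, W⟫ with ha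
  set b : Fin N → ℝ := fun k => ⟪V k - V j, W⟫ with hb
  have hWW : ⟪W, W⟫ = D0 * D0 := by
    rw [real_inner_self_eq_norm_mul_norm, hW, heq]
  have hba : ∀ k, b k - a k = D0 * D0 := by
    intro k
    have : b k - a k = ⟪(V k - V j) - (V k - V i), W⟫ := by
      rw [inner_sub_left]
    rw [this]
    have : (V k - V j) - (V k - V i) = W := by rw [hW]; abel
    rw [this, hWW]
  have hak : ∀ k, a k ≤ 0 := by
    intro k
    have h1 : b k ≤ ‖V k - V j‖ * ‖W‖ := real_inner_le_norm _ _
    have h2 : ‖V k - V j‖ * ‖W‖ ≤ D0 * D0 := by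
      rw [hW, heq]
      exact mul_le_mul_of_nonneg_right (hle k j) hD0
    have := hba k
    linarith
  have hbk : ∀ k, 0 ≤ b k := by
    intro k
    have h1 : ⟪V i - V k, W⟫ ≤ ‖V i - V k‖ * ‖W‖ := real_inner_le_norm _ _
    have h2 : ‖V i - V k‖ * ‖W‖ ≤ D0 * D0 := by
      rw [hW, heq]
      exact mul_le_mul_of_nonneg_right (hle i k) hD0
    have h3 : a k = -⟪V i - V k, W⟫ := by
      rw [ha]
      simp only [← inner_neg_left]
      congr 1
      abel
    have := hba k
    linarith
  have hsum1 : ⟪(((N : ℝ) - 1)⁻¹ • ∑ k ∈ Finset.univ.erase i, ψ ‖X i - X k‖ • (V k - V i)),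
      W⟫ = ((N : ℝ) - 1)⁻¹ * ∑ k ∈ Finset.univ.erase i, ψ ‖X i - X k‖ * a k := by
    rw [real_inner_smul_left, sum_inner]
    congr 1
    exact Finset.sum_congr rfl fun k _ => real_inner_smul_left _ _ _
  have hsum2 : ⟪(((N : ℝ) - 1)⁻¹ • ∑ k ∈ Finset.univ.erase j, ψ ‖X j - X k‖ • (V k - V j)),
      W⟫ = ((N : ℝ) - 1)⁻¹ * ∑ k ∈ Finset.univ.erase j, ψ ‖X j - X k‖ * b k := by
    rw [real_inner_smul_left, sum_inner]
    congr 1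
    exact Finset.sum_congr rfl fun k _ => real_inner_smul_left _ _ _
  rw [inner_sub_left, hsum1, hsum2]
  have hbound1 : ∑ k ∈ Finset.univ.erase i, ψ ‖X i - X k‖ * a k ≤
      ∑ k ∈ Finset.univ.erase i, ψ0 * a k :=
    Finset.sum_le_sum fun k _ => mul_le_mul_of_nonpos_right (hlow i k) (hak k)
  have hbound2 : ∑ k ∈ Finset.univ.erase j, ψ0 * b k ≤
      ∑ k ∈ Finset.univ.erase j, ψ ‖X j - X k‖ * b k :=
    Finset.sum_le_sum fun k _ => mul_le_mul_of_nonneg_right (hlow j k) (hbk k)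
  have hai : a i = 0 := by simp [ha, hW]
  have hbj : b j = 0 := by simp [hb, hW]
  have hsum_a : ∑ k ∈ Finset.univ.erase i, ψ0 * a k = ψ0 * ∑ k, a k := by
    rw [← Finset.mul_sum]
    congr 1
    exact Finset.sum_erase _ (by rw [hai])
  have hsum_b : ∑ k ∈ Finset.univ.erase j, ψ0 * b k = ψ0 * ∑ k, b k := by
    rw [← Finset.mul_sum]
    congr 1
    exact Finset.sum_erase _ (by rw [hbj])
  have hdiff : (∑ k, a k) - (∑ k, b k) = -(N : ℝ) * (D0 * D0) := by
    rw [← Finset.sum_sub_distrib]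
    have : ∀ k : Fin N, a k - b k = -(D0 * D0) := fun k => by have := hba k; linarith
    rw [Finset.sum_congr rfl fun k _ => this k]
    simp [Finset.card_univ]
    try ring
  have step : ((N : ℝ) - 1)⁻¹ * ∑ k ∈ Finset.univ.erase i, ψ ‖X i - X k‖ * a k -
      ((N : ℝ) - 1)⁻¹ * ∑ k ∈ Finset.univ.erase j, ψ ‖X j - X k‖ * b k ≤
      ((N : ℝ) - 1)⁻¹ * (ψ0 * ((∑ k, a k) - (∑ k, b k))) := by
    have hinv : (0:ℝ) ≤ ((N : ℝ) - 1)⁻¹ := by positivity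
    have h1 := hbound1
    have h2 := hbound2
    rw [hsum_a] at h1
    rw [hsum_b] at h2
    nlinarith [mul_le_mul_of_nonneg_left h1 hinv, mul_le_mul_of_nonneg_left h2 hinv]
  refine step.trans ?_
  rw [hdiff]
  have hNinv : ((N : ℝ) - 1)⁻¹ * ((N : ℝ) - 1) = 1 := inv_mul_cancel₀ (by linarith)
  have hD2 : 0 ≤ D0 * D0 := mul_nonneg hD0 hD0
  have hNge : (1:ℝ) ≤ ((N : ℝ) - 1)⁻¹ * (N : ℝ) := by
    rw [inv_mul_eq_div, le_div_iff₀ hND]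
    linarith
  nlinarith [mul_le_mul_of_nonneg_right hNge (mul_nonneg hψ0.le hD2)]

lemma cs_decay {N d : ℕ} (hN : 2 ≤ N) {ta tb : ℝ} (hab : ta < tb)
    (ψ : ℝ → ℝ)
    (x v : Fin N → ℝ → EuclideanSpace ℝ (Fin d))
    (hv : ∀ i, ∀ s ∈ Set.Icc ta tb, HasDerivAt (v i)
      (((N : ℝ) - 1)⁻¹ • ∑ j ∈ Finset.univ.erase i,
        ψ ‖x i s - x j s‖ • (v j s - v i s)) s)
    (ψt : ℝ → ℝ)
    (hψtpos : ∀ s ∈ Set.Icc ta tb, 0 < ψt s)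
    (hlow : ∀ i j : Fin N, ∀ s ∈ Set.Icc ta tb, ψt s ≤ ψ ‖x i s - x j s‖)
    (ρ : ℝ → ℝ) (hρc : Continuous ρ) (hρle : ∀ s ∈ Set.Icc ta tb, ρ s ≤ ψt s) :
    (⨆ p : Fin N × Fin N, ‖v p.1 tb - v p.2 tb‖) ≤
      (⨆ p : Fin N × Fin N, ‖v p.1 ta - v p.2 ta‖) * Real.exp (-∫ s in ta..tb, ρ s) := by
  have hNpos : 0 < N := by omega
  haveI : Nonempty (Fin N) := ⟨⟨0, hNpos⟩⟩
  have hN1 : (1 : ℝ) ≤ (N : ℝ) - 1 := by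
    have : (2 : ℝ) ≤ (N : ℝ) := by exact_mod_cast hN
    linarith
  set F : (Fin N × Fin N) → ℝ → ℝ := fun p t => ‖v p.1 t - v p.2 t‖ with hF
  set D : ℝ → ℝ := fun t => ⨆ p : Fin N × Fin N, F p t with hD
  have hDsup' : ∀ t, D t = Finset.univ.sup' Finset.univ_nonempty (fun p => F p t) :=
    fun t => (Finset.sup'_univ_eq_ciSup _).symm
  have hFle : ∀ (p : Fin N × Fin N) t, F p t ≤ D t := by
    intro p t
    rw [hDsup']
    exact Finset.le_sup' (fun p => F p t) (Finset.mem_univ p)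
  have hD0 : ∀ t, 0 ≤ D t := by
    intro t
    have := hFle ⟨⟨0, hNpos⟩, ⟨0, hNpos⟩⟩ t
    simpa [hF] using this
  have hvc : ∀ i, ContinuousOn (v i) (Icc ta tb) :=
    fun i s hs => ((hv i s hs).continuousAt).continuousWithinAt
  have hFc : ∀ p : Fin N × Fin N, ContinuousOn (F p) (Icc ta tb) :=
    fun p => ((hvc p.1).sub (hvc p.2)).norm
  have hDc : ContinuousOn D (Icc ta tb) := by
    have h1 := ContinuousOn.finset_sup'_apply (f := fun (p : Fin N × Fin N) t => F p t)
      (t := Icc ta tb) Finset.univ_nonempty (fun p _ => hFc p)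
    have : D = fun t => Finset.univ.sup' Finset.univ_nonempty (fun p => F p t) :=
      funext fun t => hDsup' t
    rw [this]
    exact h1
  -- the slope estimate
  set f' : ℝ → ℝ := fun s => -(ρ s * D s) with hf'
  have key : ∀ s ∈ Ico ta tb, ∀ r, f' s < r → ∃ᶠ z in 𝓝[>] s, slope D s z < r := by
    intro s hs r hr
    have hsmem : s ∈ Icc ta tb := ⟨hs.1, hs.2.le⟩
    have hA : ∀ p : Fin N × Fin N, ∀ᶠ z in 𝓝[>] s, (F p z - D s) / (z - s) < r := by
      intro p
      have hwd : HasDerivAt (fun t => v p.1 t - v p.2 t)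
          ((((N : ℝ) - 1)⁻¹ • ∑ k ∈ Finset.univ.erase p.1,
              ψ ‖x p.1 s - x k s‖ • (v k s - v p.1 s)) -
            (((N : ℝ) - 1)⁻¹ • ∑ k ∈ Finset.univ.erase p.2,
              ψ ‖x p.2 s - x k s‖ • (v k s - v p.2 s))) s :=
        (hv p.1 s hsmem).sub (hv p.2 s hsmem)
      rcases lt_or_eq_of_le (hFle p s) with hlt | heq
      · -- non-maximal pair: slope tends to -∞
        have t1 : Tendsto (fun z => F p z - D s) (𝓝[>] s) (𝓝 (F p s - D s)) := by
          have : ContinuousAt (F p) s := (hwd.continuousAt).norm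
          exact ((this.sub continuousAt_const).tendsto).mono_left nhdsWithin_le_nhds
        have t2 : Tendsto (fun z : ℝ => (z - s)⁻¹) (𝓝[>] s) atTop := by
          apply tendsto_inv_nhdsGT_zero.comp
          rw [tendsto_nhdsWithin_iff]
          exact ⟨((continuous_id.sub continuous_const).tendsto' s 0 (by simp)).mono_left
              nhdsWithin_le_nhds,
            eventually_mem_nhdsWithin.mono fun z hz => Set.mem_Ioi.mpr (sub_pos.mpr hz)⟩
        have t3 : Tendsto (fun z => (z - s)⁻¹ * (F p z - D s)) (𝓝[>] s) atBot :=
          t2.atTop_mul_neg (by linarith) t1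
        exact (t3.eventually_lt_atBot r).mono fun z hz => by rwa [div_eq_inv_mul]
      · -- maximal pair
        by_cases hDz : D s = 0
        · -- all velocities coincide
          have hvel : ∀ k l : Fin N, v k s - v l s = 0 := by
            intro k l
            have h1 : F (k, l) s ≤ D s := hFle (k, l) s
            have : ‖v k s - v l s‖ ≤ 0 := by rw [hDz] at h1; exact h1
            simpa [norm_le_zero_iff] using this
          have hW0 : HasDerivAt (fun t => v p.1 t - v p.2 t) 0 s := by
            convert hwd using 1
            have hz1 : ∀ k, ψ ‖x p.1 s - x k s‖ • (v k s - v p.1 s) = 0 :=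
              fun k => by rw [hvel k p.1, smul_zero]
            have hz2 : ∀ k, ψ ‖x p.2 s - x k s‖ • (v k s - v p.2 s) = 0 :=
              fun k => by rw [hvel k p.2, smul_zero]
            rw [Finset.sum_congr rfl fun k _ => hz1 k, Finset.sum_congr rfl fun k _ => hz2 k]
            simp
          have hrpos : (0:ℝ) < r := by
            have : f' s = 0 := by rw [hf']; simp [hDz]
            linarith [hr, this ▸ hr]
          have tslope : Tendsto (fun z => ‖slope (fun t => v p.1 t - v p.2 t) s z‖)
              (𝓝[>] s) (𝓝 0) := by
            have h1 := hasDerivAt_iff_tendsto_slope.mp hW0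
            have h2 : Tendsto (slope (fun t => v p.1 t - v p.2 t) s) (𝓝[>] s) (𝓝 0) :=
              h1.mono_left (nhdsWithin_mono s fun z hz => ne_of_gt hz)
            simpa using h2.norm
          have hev := tslope.eventually (eventually_lt_nhds hrpos)
          refine (hev.and eventually_mem_nhdsWithin).mono ?_
          rintro z ⟨hz1, hz2 : z ∈ Ioi s⟩
          have hzs : 0 < z - s := sub_pos.mpr hz2
          have hws : v p.1 s - v p.2 s = 0 := hvel p.1 p.2
          have hFz : (F p z - D s) / (z - s) = ‖slope (fun t => v p.1 t - v p.2 t) s z‖ := by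
            rw [slope_def_module]
            rw [norm_smul]
            have : F p s = D s := heq
            rw [← this]
            have hFps : F p s = 0 := by rw [this, hDz]
            rw [hFps]
            simp only [hF]
            rw [hws, sub_zero]
            rw [Real.norm_eq_abs, abs_inv, abs_of_pos hzs]
            rw [sub_zero, div_eq_inv_mul]
          rw [hFz]
          exact hz1
        · -- positive diameter: use the derivative of the norm
          have hDpos : 0 < D s := (hD0 s).lt_of_ne (Ne.symm hDz)
          have hWnorm : ‖v p.1 s - v p.2 s‖ = D s := heq
          set A := ((((N : ℝ) - 1)⁻¹ • ∑ k ∈ Finset.univ.erase p.1,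
              ψ ‖x p.1 s - x k s‖ • (v k s - v p.1 s)) -
            (((N : ℝ) - 1)⁻¹ • ∑ k ∈ Finset.univ.erase p.2,
              ψ ‖x p.2 s - x k s‖ • (v k s - v p.2 s))) with hA'
          have hinner : ⟪A, v p.1 s - v p.2 s⟫ ≤ -(ψt s * (D s * D s)) := by
            rw [hA']
            exact cs_inner_bound hN ψ (fun i => x i s) (fun i => v i s) (ψt s) (D s)
              (hψtpos s hsmem) (fun i j => hlow i j s hsmem)
              (fun k l => hFle (k, l) s) p.1 p.2 hWnorm
          have hq : HasDerivAt (fun t => ‖v p.1 t - v p.2 t‖ ^ 2)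
              (2 * ⟪v p.1 s - v p.2 s, A⟫) s := hwd.norm_sq
          have hqne : ‖v p.1 s - v p.2 s‖ ^ 2 ≠ 0 := by
            rw [hWnorm]; positivity
          have hsq : HasDerivAt (fun t => Real.sqrt (‖v p.1 t - v p.2 t‖ ^ 2))
              ((2 * ⟪v p.1 s - v p.2 s, A⟫) / (2 * Real.sqrt (‖v p.1 s - v p.2 s‖ ^ 2))) s :=
            hq.sqrt hqne
          have hfun : (fun t => Real.sqrt (‖v p.1 t - v p.2 t‖ ^ 2)) = F p :=
            funext fun t => Real.sqrt_sq (norm_nonneg _)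
          rw [hfun] at hsq
          set L := (2 * ⟪v p.1 s - v p.2 s, A⟫) / (2 * Real.sqrt (‖v p.1 s - v p.2 s‖ ^ 2))
            with hL
          have hLval : L = ⟪v p.1 s - v p.2 s, A⟫ / D s := by
            rw [hL, Real.sqrt_sq (norm_nonneg _), hWnorm]
            ring
          have hLr : L < r := by
            rw [hLval]
            have h1 : ⟪v p.1 s - v p.2 s, A⟫ ≤ -(ψt s * (D s * D s)) := by
              rw [real_inner_comm]; exact hinner
            have h2 : ⟪v p.1 s - v p.2 s, A⟫ / D s ≤ -(ψt s * D s) := by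
              rw [div_le_iff₀ hDpos]
              calc ⟪v p.1 s - v p.2 s, A⟫ ≤ -(ψt s * (D s * D s)) := h1
                _ = -(ψt s * D s) * D s := by ring
            have h3 : -(ψt s * D s) ≤ -(ρ s * D s) := by
              have := hρle s hsmem
              nlinarith [hD0 s]
            calc ⟪v p.1 s - v p.2 s, A⟫ / D s ≤ -(ψt s * D s) := h2
              _ ≤ f' s := by rw [hf']; exact h3
              _ < r := hr
          have tslope : Tendsto (slope (F p) s) (𝓝[>] s) (𝓝 L) :=
            (hasDerivAt_iff_tendsto_slope.mp hsq).mono_left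
              (nhdsWithin_mono s fun z hz => ne_of_gt hz)
          have hev := tslope.eventually (eventually_lt_nhds hLr)
          refine hev.mono fun z hz => ?_
          have : slope (F p) s z = (F p z - D s) / (z - s) := by
            rw [slope_def_field, heq]
          rwa [this] at hz
    have hall : ∀ᶠ z in 𝓝[>] s, ∀ p : Fin N × Fin N, (F p z - D s) / (z - s) < r :=
      eventually_all.mpr hA
    refine ((hall.and eventually_mem_nhdsWithin).mono ?_).frequently
    rintro z ⟨hz1, hz2 : z ∈ Ioi s⟩
    obtain ⟨q, -, hq⟩ := Finset.exists_mem_eq_sup' (Finset.univ_nonempty)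
      (fun p : Fin N × Fin N => F p z)
    have hDz : D z = F q z := by rw [hDsup' z]; exact hq
    rw [slope_def_field, hDz]
    exact hz1 q
  -- Grönwall with an ε of room
  have main : ∀ ε > 0, D tb ≤ (D ta + ε) *
      Real.exp (ε * (tb - ta) - ∫ u in ta..tb, ρ u) := by
    intro ε hε
    set R : ℝ → ℝ := fun t => ∫ u in ta..t, ρ u with hR
    have hRd : ∀ t, HasDerivAt R (ρ t) t := fun t =>
      intervalIntegral.integral_hasDerivAt_right (hρc.intervalIntegrable _ _)
        (hρc.stronglyMeasurable.stronglyMeasurableAtFilter) hρc.continuousAt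
    set B : ℝ → ℝ := fun t => (D ta + ε) * Real.exp (ε * (t - ta) - R t) with hB
    have hBpos : ∀ t, 0 < B t := fun t =>
      mul_pos (add_pos_of_nonneg_of_pos (hD0 ta) hε) (Real.exp_pos _)
    have hBd : ∀ t, HasDerivAt B ((ε - ρ t) * B t) t := by
      intro t
      have h1 : HasDerivAt (fun u => ε * (u - ta) - R u) (ε - ρ t) t := by
        have := (((hasDerivAt_id t).sub_const ta).const_mul ε).sub (hRd t)
        rw [mul_one] at this; exact this
      have h2 := (h1.exp).const_mul (D ta + ε)
      have h3 : (ε - ρ t) * B t = (D ta + ε) * (Real.exp (ε * (t - ta) - R t) * (ε - ρ t)) := by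
        simp only [hB]; ring
      rw [h3]; exact h2
    have happ := image_le_of_liminf_slope_right_lt_deriv_boundary
      (f := D) (f' := f') (B := B) (B' := fun t => (ε - ρ t) * B t)
      hDc key ?_ hBd ?_
    · have := happ (right_mem_Icc.mpr hab.le)
      rw [hB] at this
      exact this
    · rw [hB]
      simp only [sub_self, mul_zero, zero_sub]
      have : R ta = 0 := intervalIntegral.integral_same
      rw [this]
      simp
      linarith
    · intro t ht hDB
      have hb := hBpos t
      simp only [hf']
      rw [hDB]
      nlinarith
  -- pass to the limit ε → 0⁺
  have hlim : Tendsto (fun ε => (D ta + ε) * Real.exp (ε * (tb - ta) - ∫ u in ta..tb, ρ u))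
      (𝓝[>] 0) (𝓝 ((D ta + 0) * Real.exp (0 * (tb - ta) - ∫ u in ta..tb, ρ u))) := by
    apply Tendsto.mono_left _ nhdsWithin_le_nhds
    have hc : Continuous (fun ε : ℝ => (D ta + ε) *
        Real.exp (ε * (tb - ta) - ∫ u in ta..tb, ρ u)) :=
      (continuous_const.add continuous_id).mul
        (Real.continuous_exp.comp ((continuous_id.mul continuous_const).sub continuous_const))
    exact hc.tendsto 0
  have := ge_of_tendsto hlim (eventually_mem_nhdsWithin.mono fun ε hε => main ε hε)
  simpa using this



theorem stmt_16 (N d : ℕ) (hN : 2 ≤ N) (hd : 1 ≤ d)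
    (ta tb T Kt : ℝ) (h0a : 0 ≤ ta) (hab : ta < tb) (hK : 0 < Kt)
    (hTpos : 0 < T) (hTlen : tb - ta ≤ T)
    (ψ : ℝ → ℝ) (hψc : Continuous ψ) (hψpos : ∀ r, 0 < ψ r) (hψK : ∀ r, ψ r ≤ Kt)
    (x v : Fin N → ℝ → EuclideanSpace ℝ (Fin d))
    (hx : ∀ i, ∀ s ∈ Set.Icc ta tb, HasDerivAt (x i) (v i s) s)
    (hv : ∀ i, ∀ s ∈ Set.Icc ta tb, HasDerivAt (v i)
      (((N : ℝ) - 1)⁻¹ • ∑ j ∈ Finset.univ.erase i,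
        ψ ‖x i s - x j s‖ • (v j s - v i s)) s)
    (ψt : ℝ → ℝ)
    (hψt : ∀ s : ℝ, ψt s = sInf (ψ '' Set.Icc 0
      (sSup ((fun u => ⨆ p : Fin N × Fin N, ‖x p.1 u - x p.2 u‖) '' Set.Icc 0 s))))
    (hψtpos : ∀ s ∈ Set.Icc ta tb, 0 < ψt s)
    (hlow : ∀ i j : Fin N, ∀ s ∈ Set.Icc ta tb, ψt s ≤ ψ ‖x i s - x j s‖)
    (φ : ℝ → ℝ)
    (hφ : ∀ s : ℝ, φ s = min (Real.exp (-Kt * T) * ψt s) (Real.exp (-Kt * T) / T)) :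
    (⨆ p : Fin N × Fin N, ‖v p.1 tb - v p.2 tb‖) ≤
        (1 - ∫ s in ta..tb, φ s) * ⨆ p : Fin N × Fin N, ‖v p.1 ta - v p.2 ta‖ ∧
      (1 - ∫ s in ta..tb, φ s) ∈ Set.Ioo (0:ℝ) 1 := by
  have hta_tb : ta ≤ tb := hab.le
  have hNpos : 0 < N := by omega
  haveI : Nonempty (Fin N) := ⟨⟨0, hNpos⟩⟩
  set c : ℝ := Real.exp (-Kt * T) with hc
  have hc_pos : 0 < c := Real.exp_pos _
  have hc_lt1 : c < 1 := by
    rw [hc, ← Real.exp_zero]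
    exact Real.exp_lt_exp.mpr (by nlinarith)
  set f : ℝ → ℝ := fun u => ⨆ p : Fin N × Fin N, ‖x p.1 u - x p.2 u‖ with hfdef
  have hf0 : ∀ u, 0 ≤ f u := by
    intro u
    have := le_ciSup (Set.Finite.bddAbove
        (Set.finite_range fun p : Fin N × Fin N => ‖x p.1 u - x p.2 u‖))
      (⟨⟨0, hNpos⟩, ⟨0, hNpos⟩⟩ : Fin N × Fin N)
    simpa [hfdef] using this
  have hMnonneg : ∀ u, 0 ≤ u → 0 ≤ sSup (f '' Icc 0 u) := by
    intro u hu
    by_cases hb : BddAbove (f '' Icc 0 u)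
    · exact le_csSup_of_le hb ⟨0, ⟨le_rfl, hu⟩, rfl⟩ (hf0 0)
    · rw [Real.sSup_of_not_bddAbove hb]
  have hψtK : ∀ u ∈ Icc ta tb, ψt u ≤ Kt := by
    intro u hu
    rw [hψt u]
    refine csInf_le_of_le ⟨0, ?_⟩ ⟨0, ⟨le_rfl, hMnonneg u (h0a.trans hu.1)⟩, rfl⟩ (hψK 0)
    rintro y ⟨r, -, rfl⟩
    exact (hψpos r).le
  -- antitonicity of ψt on [ta, tb]
  have hbddmid : ∀ s s', ta ≤ s → s' ≤ tb → BddAbove (f '' Icc s s') := by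
    intro s s' hs hs'
    have hxc : ∀ i : Fin N, ContinuousOn (fun u => ‖x i u‖) (Icc ta tb) :=
      fun i u hu => ((hx i u hu).continuousAt.norm).continuousWithinAt
    have hG : ContinuousOn (fun u => ∑ i : Fin N, ‖x i u‖) (Icc ta tb) :=
      continuousOn_finset_sum Finset.univ fun i _ => hxc i
    obtain ⟨C, hC⟩ := (isCompact_Icc.image_of_continuousOn hG).bddAbove
    refine ⟨2 * C, ?_⟩
    rintro y ⟨u, hu, rfl⟩
    have humem : u ∈ Icc ta tb := ⟨hs.trans hu.1, hu.2.trans hs'⟩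
    have hGu : (∑ i : Fin N, ‖x i u‖) ≤ C := hC ⟨u, humem, rfl⟩
    simp only [hfdef]
    refine ciSup_le fun p => ?_
    have h1 : ‖x p.1 u - x p.2 u‖ ≤ ‖x p.1 u‖ + ‖x p.2 u‖ := norm_sub_le _ _
    have h2 : ‖x p.1 u‖ ≤ ∑ i : Fin N, ‖x i u‖ :=
      Finset.single_le_sum (f := fun i : Fin N => ‖x i u‖) (fun i _ => norm_nonneg _)
        (Finset.mem_univ _)
    have h3 : ‖x p.2 u‖ ≤ ∑ i : Fin N, ‖x i u‖ :=
      Finset.single_le_sum (f := fun i : Fin N => ‖x i u‖) (fun i _ => norm_nonneg _)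
        (Finset.mem_univ _)
    linarith
  have hanti : AntitoneOn ψt (Icc ta tb) := by
    intro s hs s' hs' hss'
    rw [hψt s, hψt s']
    by_cases H : BddAbove (f '' Icc 0 s')
    · have hsub : f '' Icc 0 s ⊆ f '' Icc 0 s' := image_mono (f := f) (Icc_subset_Icc_right hss')
      have hne : (f '' Icc 0 s).Nonempty := ⟨f 0, mem_image_of_mem f ⟨le_rfl, h0a.trans hs.1⟩⟩
      have hM : sSup (f '' Icc 0 s) ≤ sSup (f '' Icc 0 s') := csSup_le_csSup H hne hsub
      refine csInf_le_csInf ⟨0, ?_⟩ ⟨ψ 0, ⟨0, ⟨le_rfl, hMnonneg s (h0a.trans hs.1)⟩, rfl⟩⟩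
        (image_mono (f := ψ) (Icc_subset_Icc_right hM))
      rintro y ⟨r, -, rfl⟩
      exact (hψpos r).le
    · have H0 : ¬ BddAbove (f '' Icc 0 s) := by
        intro hB
        apply H
        have hsplit : f '' Icc 0 s' ⊆ f '' Icc 0 s ∪ f '' Icc s s' := by
          rintro y ⟨u, hu, rfl⟩
          rcases le_or_gt u s with h | h
          · exact Or.inl ⟨u, ⟨hu.1, h⟩, rfl⟩
          · exact Or.inr ⟨u, ⟨h.le, hu.2⟩, rfl⟩
        exact (hB.union (hbddmid s s' hs.1 hs'.2)).mono hsplit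
      rw [Real.sSup_of_not_bddAbove H, Real.sSup_of_not_bddAbove H0]
  -- the comparison function h
  set h : ℝ → ℝ := fun s => min (ψt (max ta (min s tb))) (1 / T) with hh
  have hclamp_mem : ∀ s : ℝ, max ta (min s tb) ∈ Icc ta tb := by
    intro s
    constructor
    · exact le_max_left _ _
    · exact max_le hta_tb (min_le_right _ _)
  have hhanti : Antitone h := by
    intro s s' hss'
    simp only [hh]
    refine min_le_min ?_ le_rfl
    exact hanti (hclamp_mem s) (hclamp_mem s')
      (max_le_max le_rfl (min_le_min_right _ hss'))
  have hh_pos : ∀ s, 0 < h s := fun s =>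
    lt_min (hψtpos _ (hclamp_mem s)) (by positivity)
  have hh_leKt : ∀ s, h s ≤ Kt := fun s =>
    le_trans (min_le_left _ _) (hψtK _ (hclamp_mem s))
  have hh_eq : ∀ s ∈ Icc ta tb, h s = min (ψt s) (1 / T) := by
    intro s hs
    simp only [hh]
    have heqc : max ta (min s tb) = s := by
      rw [min_eq_left hs.2, max_eq_right hs.1]
    rw [heqc]
  have hφ_h : ∀ s ∈ Icc ta tb, φ s = c * h s := by
    intro s hs
    rw [hφ s, hh_eq s hs, mul_min_of_nonneg _ _ hc_pos.le, mul_one_div]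
  have hint_h : ∀ a b : ℝ, IntervalIntegrable h volume a b := fun a b =>
    hhanti.intervalIntegrable
  set J : ℝ := ∫ s in ta..tb, h s with hJ
  have hφint : IntervalIntegrable φ volume ta tb := by
    have : AntitoneOn φ (uIcc ta tb) := by
      rw [uIcc_of_le hta_tb]
      intro s hs s' hs' hss'
      rw [hφ s, hφ s']
      exact min_le_min (mul_le_mul_of_nonneg_left (hanti hs hs' hss') (Real.exp_pos _).le) le_rfl
    exact this.intervalIntegrable
  have hJint : (∫ s in ta..tb, φ s) = c * J := by
    rw [hJ, ← intervalIntegral.integral_const_mul]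
    apply intervalIntegral.integral_congr
    intro s hs
    rw [uIcc_of_le hta_tb] at hs
    exact hφ_h s hs
  have hJ0 : 0 ≤ J := intervalIntegral.integral_nonneg hta_tb fun u _ => (hh_pos u).le
  have hIpos : 0 < ∫ s in ta..tb, φ s := by
    apply intervalIntegral.intervalIntegral_pos_of_pos_on hφint _ hab
    intro s hs
    rw [hφ s]
    exact lt_min (mul_pos (Real.exp_pos _) (hψtpos s ⟨hs.1.le, hs.2.le⟩)) (by positivity)
  have hIlt1 : (∫ s in ta..tb, φ s) < 1 := by
    have hle : (∫ s in ta..tb, φ s) ≤ ∫ _ in ta..tb, c / T := by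
      apply intervalIntegral.integral_mono_on hta_tb hφint intervalIntegrable_const
      intro s _
      rw [hφ s]
      exact min_le_right _ _
    rw [intervalIntegral.integral_const, smul_eq_mul] at hle
    have h2 : (tb - ta) * (c / T) ≤ T * (c / T) :=
      mul_le_mul_of_nonneg_right hTlen (by positivity)
    have h3 : T * (c / T) = c := by field_simp
    linarith
  refine ⟨?_, by constructor <;> linarith⟩
  -- part 1
  have hD0ta : 0 ≤ ⨆ p : Fin N × Fin N, ‖v p.1 ta - v p.2 ta‖ := by
    have := le_ciSup (Set.Finite.bddAbove
        (Set.finite_range fun p : Fin N × Fin N => ‖v p.1 ta - v p.2 ta‖))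
      (⟨⟨0, hNpos⟩, ⟨0, hNpos⟩⟩ : Fin N × Fin N)
    simpa using this
  set Dta : ℝ := ⨆ p : Fin N × Fin N, ‖v p.1 ta - v p.2 ta‖ with hDta
  have hmain : ∀ δ > 0, (⨆ p : Fin N × Fin N, ‖v p.1 tb - v p.2 tb‖) ≤
      (1 - (∫ s in ta..tb, φ s)) * Dta + c * Kt * δ * Dta := by
    intro δ hδ
    set ρ : ℝ → ℝ := fun s => δ⁻¹ * ∫ u in s..(s + δ), h u with hρ
    have hρc : Continuous ρ := by
      have hP : Continuous fun t => ∫ u in (0:ℝ)..t, h u :=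
        intervalIntegral.continuous_primitive hint_h 0
      have hρeq : ρ = fun s => δ⁻¹ *
          ((∫ u in (0:ℝ)..(s + δ), h u) - ∫ u in (0:ℝ)..s, h u) := by
        funext s
        simp only [hρ]
        congr 1
        rw [← intervalIntegral.integral_add_adjacent_intervals (hint_h 0 s) (hint_h s (s + δ))]
        ring
      rw [hρeq]
      exact continuous_const.mul ((hP.comp (continuous_id.add continuous_const)).sub hP)
    have hρ_le_h : ∀ s, ρ s ≤ h s := by
      intro s
      have hsd : s ≤ s + δ := by linarith
      have h1 : (∫ u in s..(s + δ), h u) ≤ ∫ _ in s..(s + δ), h s := by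
        apply intervalIntegral.integral_mono_on hsd (hint_h _ _) intervalIntegrable_const
        intro u hu
        exact hhanti hu.1
      rw [intervalIntegral.integral_const, smul_eq_mul] at h1
      simp only [hρ]
      calc δ⁻¹ * ∫ u in s..(s + δ), h u ≤ δ⁻¹ * ((s + δ - s) * h s) :=
            mul_le_mul_of_nonneg_left h1 (by positivity)
        _ = h s := by field_simp; ring
    have hρ_ge : ∀ s, h (s + δ) ≤ ρ s := by
      intro s
      have hsd : s ≤ s + δ := by linarith
      have h1 : (∫ _ in s..(s + δ), h (s + δ)) ≤ ∫ u in s..(s + δ), h u := by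
        apply intervalIntegral.integral_mono_on hsd intervalIntegrable_const (hint_h _ _)
        intro u hu
        exact hhanti hu.2
      rw [intervalIntegral.integral_const, smul_eq_mul] at h1
      simp only [hρ]
      calc h (s + δ) = δ⁻¹ * ((s + δ - s) * h (s + δ)) := by field_simp; ring
        _ ≤ δ⁻¹ * ∫ u in s..(s + δ), h u := mul_le_mul_of_nonneg_left h1 (by positivity)
    have hρ_nonneg : ∀ s, 0 ≤ ρ s := fun s => (hh_pos _).le.trans (hρ_ge s)
    have hρ_le_Kt : ∀ s, ρ s ≤ Kt := fun s => (hρ_le_h s).trans (hh_leKt s)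
    have hρle : ∀ s ∈ Icc ta tb, ρ s ≤ ψt s := fun s hs =>
      (hρ_le_h s).trans (le_trans (le_of_eq (hh_eq s hs)) (min_le_left _ _))
    set R : ℝ := ∫ s in ta..tb, ρ s with hR
    have hR_nonneg : 0 ≤ R :=
      intervalIntegral.integral_nonneg hta_tb fun u _ => hρ_nonneg u
    have hR_le : R ≤ Kt * T := by
      have h1 : R ≤ ∫ _ in ta..tb, Kt := by
        apply intervalIntegral.integral_mono_on hta_tb
          (hρc.intervalIntegrable _ _) intervalIntegrable_const
        intro s _
        exact hρ_le_Kt s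
      rw [intervalIntegral.integral_const, smul_eq_mul] at h1
      nlinarith
    have hR_ge : J - δ * Kt ≤ R := by
      have hs1 : (∫ s in ta..tb, h (s + δ)) ≤ R := by
        apply intervalIntegral.integral_mono_on hta_tb _ (hρc.intervalIntegrable _ _)
        · intro u _
          exact hρ_ge u
        · have : Antitone fun s => h (s + δ) := fun a b hab' => hhanti (by linarith)
          exact this.intervalIntegrable
      have hs2 : (∫ s in ta..tb, h (s + δ)) = ∫ u in (ta + δ)..(tb + δ), h u :=
        intervalIntegral.integral_comp_add_right h δ
      have hs3 : (∫ u in ta..(ta + δ), h u) + (∫ u in (ta + δ)..(tb + δ), h u) =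
          ∫ u in ta..(tb + δ), h u :=
        intervalIntegral.integral_add_adjacent_intervals (hint_h _ _) (hint_h _ _)
      have hs4 : (∫ u in ta..tb, h u) + (∫ u in tb..(tb + δ), h u) =
          ∫ u in ta..(tb + δ), h u :=
        intervalIntegral.integral_add_adjacent_intervals (hint_h _ _) (hint_h _ _)
      have hs5 : 0 ≤ ∫ u in tb..(tb + δ), h u :=
        intervalIntegral.integral_nonneg (by linarith) fun u _ => (hh_pos u).le
      have hs6 : (∫ u in ta..(ta + δ), h u) ≤ δ * Kt := by
        have := intervalIntegral.integral_mono_on (by linarith : ta ≤ ta + δ)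
          (hint_h ta (ta + δ)) intervalIntegrable_const (fun u _ => hh_leKt u)
        rw [intervalIntegral.integral_const, smul_eq_mul] at this
        nlinarith
      rw [hJ]
      linarith
    have hdecay := cs_decay hN hab ψ x v hv ψt hψtpos hlow ρ hρc hρle
    rw [← hR, ← hDta] at hdecay
    have hcle : c ≤ Real.exp (-R) := by
      rw [hc]
      exact Real.exp_le_exp.mpr (by nlinarith)
    have hexp : Real.exp (-R) ≤ 1 - c * R := by
      have h1 : R + 1 ≤ Real.exp R := Real.add_one_le_exp R
      have h2 : Real.exp (-R) * Real.exp R = 1 := by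
        rw [← Real.exp_add]; simp
      nlinarith [Real.exp_pos (-R), mul_le_mul_of_nonneg_right hcle hR_nonneg]
    have hcR : (∫ s in ta..tb, φ s) - c * Kt * δ ≤ c * R := by
      rw [hJint]
      nlinarith
    calc (⨆ p : Fin N × Fin N, ‖v p.1 tb - v p.2 tb‖) ≤ Dta * Real.exp (-R) := hdecay
      _ ≤ Dta * (1 - ((∫ s in ta..tb, φ s) - c * Kt * δ)) := by
          apply mul_le_mul_of_nonneg_left _ hD0ta
          linarith
      _ = (1 - (∫ s in ta..tb, φ s)) * Dta + c * Kt * δ * Dta := by ring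
  apply le_of_forall_pos_le_add
  intro ε hε
  have hQ0 : 0 ≤ c * Kt * Dta := mul_nonneg (mul_nonneg hc_pos.le hK.le) hD0ta
  have hQ : 0 < c * Kt * Dta + 1 := by linarith
  have hδpos : 0 < ε / (c * Kt * Dta + 1) := div_pos hε hQ
  have h1 := hmain _ hδpos
  have hbound : c * Kt * (ε / (c * Kt * Dta + 1)) * Dta ≤ ε := by
    calc c * Kt * (ε / (c * Kt * Dta + 1)) * Dta
        = (c * Kt * Dta) * (ε / (c * Kt * Dta + 1)) := by ring
      _ ≤ (c * Kt * Dta + 1) * (ε / (c * Kt * Dta + 1)) :=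
          mul_le_mul_of_nonneg_right (by linarith) hδpos.le
      _ = ε := by rw [mul_comm]; exact div_mul_cancel₀ ε hQ.ne'
  linarith
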